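/- arXiv:1903.09886 — 5 statements merged into one kernel-verified Lean document; each statement's English description precedes it below -/
import Mathlib

section
/- If p is Lipschitz with ‖ṗ‖_∞ ≤ M on [0,T], then for all 0 ≤ s < t ≤ T the partial derivatives of the average velocity v(s,t) = (1/(t-s)) ∫_s^t p dτ satisfy |∂v/∂s| ≤ M/2 and |∂v/∂t| ≤ M/2. -/
open MeasureTheory

/-- if `p` is Lipschitz with constant `M` on `[0,T]`, then the partial
derivatives `∂v/∂s = (v(s,t) - p s)/(t-s)` and `∂v/∂t = (p t - v(s,t))/(t-s)` of the
average velocity `v(s,t) = (1/(t-s)) ∫_s^t p` are bounded by `M/2`. -/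
theorem stmt_2 (T M : ℝ) (hT : 0 < T) (p : ℝ → ℝ)
    (hLip : ∀ t ∈ Set.Icc (0:ℝ) T, ∀ τ ∈ Set.Icc (0:ℝ) T, |p t - p τ| ≤ M * |t - τ|)
    (hint : ∀ s t : ℝ, IntervalIntegrable p volume s t) :
    ∀ s t : ℝ, 0 ≤ s → s < t → t ≤ T →
      |((t - s)⁻¹ * ∫ τ in s..t, p τ - p s) / (t - s)| ≤ M / 2 ∧
      |(p t - (t - s)⁻¹ * ∫ τ in s..t, p τ) / (t - s)| ≤ M / 2 := by
  intro s t hs hst htT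
  have hts : (0:ℝ) < t - s := by linarith
  have hst' : s ≤ t := hst.le
  have hmem : ∀ τ ∈ Set.Icc s t, τ ∈ Set.Icc (0:ℝ) T := fun τ hτ =>
    ⟨le_trans hs hτ.1, le_trans hτ.2 htT⟩
  have hsI : s ∈ Set.Icc (0:ℝ) T := ⟨hs, by linarith⟩
  have htI : t ∈ Set.Icc (0:ℝ) T := ⟨by linarith, htT⟩
  -- integral of linear functions
  have hlin1 : (∫ τ in s..t, M * (τ - s)) = M * (t - s)^2 / 2 := by
    rw [intervalIntegral.integral_const_mul]
    have : (∫ τ in s..t, (τ - s)) = (t - s)^2 / 2 := by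
      rw [intervalIntegral.integral_sub (continuous_id'.intervalIntegrable s t)
        intervalIntegrable_const, integral_id, intervalIntegral.integral_const]
      simp [smul_eq_mul]; ring
    rw [this]; ring
  have hlin2 : (∫ τ in s..t, M * (t - τ)) = M * (t - s)^2 / 2 := by
    rw [intervalIntegral.integral_const_mul]
    have : (∫ τ in s..t, (t - τ)) = (t - s)^2 / 2 := by
      rw [intervalIntegral.integral_sub intervalIntegrable_const
        (continuous_id'.intervalIntegrable s t), integral_id, intervalIntegral.integral_const]
      simp [smul_eq_mul]; ring
    rw [this]; ring
  have hint1 : IntervalIntegrable (fun τ => p τ - p s) volume s t :=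
    (hint s t).sub intervalIntegrable_const
  have hint2 : IntervalIntegrable (fun τ => p t - p τ) volume s t :=
    (intervalIntegrable_const).sub (hint s t)
  have key : ∀ f : ℝ → ℝ, IntervalIntegrable f volume s t →
      (∀ τ ∈ Set.Icc s t, |f τ| ≤ M * (τ - s)) →
      |∫ τ in s..t, f τ| ≤ M * (t - s)^2 / 2 := by
    intro f hf hb
    calc |∫ τ in s..t, f τ| ≤ ∫ τ in s..t, |f τ| :=
          intervalIntegral.abs_integral_le_integral_abs hst'
      _ ≤ ∫ τ in s..t, M * (τ - s) := by
          apply intervalIntegral.integral_mono_on hst' hf.abs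
          · exact ((continuous_const.mul (continuous_id.sub continuous_const)).intervalIntegrable s t)
          · exact hb
      _ = M * (t - s)^2 / 2 := hlin1
  have key2 : |∫ τ in s..t, (p t - p τ)| ≤ M * (t - s)^2 / 2 := by
    calc |∫ τ in s..t, (p t - p τ)| ≤ ∫ τ in s..t, |p t - p τ| :=
          intervalIntegral.abs_integral_le_integral_abs hst'
      _ ≤ ∫ τ in s..t, M * (t - τ) := by
          apply intervalIntegral.integral_mono_on hst' hint2.abs
            ((continuous_const.mul (continuous_const.sub continuous_id)).intervalIntegrable s t)
          intro τ hτ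
          have := hLip t htI τ (hmem τ hτ)
          rwa [abs_of_nonneg (by linarith [hτ.2] : (0:ℝ) ≤ t - τ)] at this
      _ = M * (t - s)^2 / 2 := hlin2
  have key1 : |∫ τ in s..t, (p τ - p s)| ≤ M * (t - s)^2 / 2 := by
    apply key _ hint1
    intro τ hτ
    have := hLip τ (hmem τ hτ) s hsI
    rwa [abs_of_nonneg (by linarith [hτ.1] : (0:ℝ) ≤ τ - s)] at this
  constructor
  · have : ((t - s)⁻¹ * ∫ τ in s..t, p τ - p s) / (t - s)
        = (∫ τ in s..t, (p τ - p s)) / (t - s)^2 := by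
      rw [mul_comm, ← div_eq_mul_inv, div_div, ← sq]
    rw [this, abs_div, abs_of_nonneg (by positivity : (0:ℝ) ≤ (t-s)^2),
      div_le_iff₀ (by positivity)]
    linarith
  · have heq : (p t - (t - s)⁻¹ * ∫ τ in s..t, p τ)
        = (∫ τ in s..t, (p t - p τ)) * (t - s)⁻¹ := by
      rw [intervalIntegral.integral_sub intervalIntegrable_const (hint s t),
        intervalIntegral.integral_const]
      field_simp
      ring
    rw [heq]
    have : (∫ τ in s..t, (p t - p τ)) * (t - s)⁻¹ / (t - s)
        = (∫ τ in s..t, (p t - p τ)) / (t - s)^2 := by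
      rw [← div_eq_mul_inv, div_div, ← sq]
    rw [this, abs_div, abs_of_nonneg (by positivity : (0:ℝ) ≤ (t-s)^2),
      div_le_iff₀ (by positivity)]
    linarith
end

section
/- Suppose a particle with constant velocity v collides with the disk at time t from the right, the disk position is η(t) = ∫_0^t p, the particle never penetrates the disk (ω(τ) ≥ η(τ) for τ ∈ [0,t) where ω(τ) = η(t) - (t-τ)v), and v ≠ min_{s∈[0,t]} ⟨p⟩_{s,t}. Then min_{s∈[0,t]} ⟨p⟩_{s,t} < v < p(t) implies there exists s* ∈ [0,t) with v = ⟨p⟩_{s*,t} (i.e., v is attained as an average disk velocity), and conversely if the particle collided with the disk at some earlier time s then v = ⟨p⟩_{s,t}. In particular, the non-penetration condition fails whenever min ⟨p⟩ < v < p(t) and the particle is assumed never to have collided before. -/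
open MeasureTheory

/-- precollisional velocities. With `η t = ∫_0^t p`, the average velocity
`avg s = ⟨p⟩_{s,t}` (with `avg t = p t`), `u = min_{s∈[0,t]} ⟨p⟩_{s,t}`, and particle
trajectory `ω τ = η t - (t - τ) v`:
(i) if `u < v < p t` then `v = ⟨p⟩_{s,t}` for some `s ∈ [0,t)`;
(ii) conversely, if the particle collided with the disk at some earlier time `s`
    (i.e. `ω s = η s`), then `v = ⟨p⟩_{s,t}`;
(iii) if `u < v < p t`, the non-penetration condition fails at some earlier time:
    `ω τ < η τ` for some `τ ∈ [0,t)`. -/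
theorem stmt_3 (T t v : ℝ) (p : ℝ → ℝ) (hp : ContinuousOn p (Set.Icc 0 T))
    (ht : 0 < t) (htT : t ≤ T)
    (η : ℝ → ℝ) (hη : ∀ τ, η τ = ∫ x in (0:ℝ)..τ, p x)
    (avg : ℝ → ℝ)
    (havg : ∀ s, s ≠ t → avg s = (t - s)⁻¹ * ∫ τ in s..t, p τ)
    (havgt : avg t = p t)
    (u : ℝ) (hu : IsLeast (avg '' Set.Icc 0 t) u)
    (ω : ℝ → ℝ) (hω : ∀ τ, ω τ = η t - (t - τ) * v) :
    (u < v → v < p t → ∃ s ∈ Set.Ico 0 t, v = avg s) ∧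
    (∀ s ∈ Set.Ico 0 t, ω s = η s → v = avg s) ∧
    (u < v → v < p t → ∃ τ ∈ Set.Ico 0 t, ω τ < η τ) := by
  have hsub : Set.Icc (0:ℝ) t ⊆ Set.Icc 0 T := Set.Icc_subset_Icc le_rfl htT
  have hpc : ContinuousOn p (Set.Icc 0 t) := hp.mono hsub
  have hint : ∀ a b : ℝ, a ∈ Set.Icc (0:ℝ) t → b ∈ Set.Icc (0:ℝ) t →
      IntervalIntegrable p volume a b := fun a b ha hb =>
    (hpc.mono (Set.uIcc_subset_Icc ha hb)).intervalIntegrable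
  -- splitting of the integral
  have hsplit : ∀ s ∈ Set.Icc (0:ℝ) t, η t - η s = ∫ τ in s..t, p τ := by
    intro s hs
    rw [hη, hη, ← intervalIntegral.integral_add_adjacent_intervals
      (hint 0 s ⟨le_rfl, ht.le⟩ hs) (hint s t hs ⟨ht.le, le_rfl⟩)]
    ring
  -- if the integral equals (t-s)*v and s < t, then v = avg s
  have hkey : ∀ s ∈ Set.Ico (0:ℝ) t, η t - η s = (t - s) * v → v = avg s := by
    intro s hs h
    have hne : t - s ≠ 0 := by have := hs.2; intro h'; linarith [sub_eq_zero.mp h']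
    rw [havg s (by intro h'; exact absurd h' (ne_of_lt hs.2)),
      ← hsplit s ⟨hs.1, hs.2.le⟩, h]
    field_simp
  -- part (ii)
  have part2 : ∀ s ∈ Set.Ico 0 t, ω s = η s → v = avg s := by
    intro s hs hcol
    apply hkey s hs
    rw [hω] at hcol
    linarith
  -- the minimum point
  obtain ⟨s₀, hs₀mem, hs₀⟩ := hu.1
  -- value of avg at points below t
  have havgval : ∀ s ∈ Set.Ico (0:ℝ) t, (t - s) * avg s = η t - η s := by
    intro s hs
    have hne : t - s ≠ 0 := by have := hs.2; intro h'; linarith [sub_eq_zero.mp h']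
    rw [havg s (ne_of_lt hs.2), hsplit s ⟨hs.1, hs.2.le⟩]
    field_simp
  -- parts (i) and (iii) under the hypotheses
  have main : u < v → v < p t → (∃ s ∈ Set.Ico 0 t, v = avg s) ∧
      (∃ τ ∈ Set.Ico 0 t, ω τ < η τ) := by
    intro huv hvp
    have hs₀t : s₀ ≠ t := by
      intro h; rw [h, havgt] at hs₀; linarith
    have hs₀lt : s₀ < t := lt_of_le_of_ne hs₀mem.2 hs₀t
    have hs₀Ico : s₀ ∈ Set.Ico (0:ℝ) t := ⟨hs₀mem.1, hs₀lt⟩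
    -- f τ = η τ - η t + (t - τ) * v
    set f : ℝ → ℝ := fun τ => η τ - η t + (t - τ) * v with hf
    have hfs₀ : 0 < f s₀ := by
      have h1 := havgval s₀ hs₀Ico
      have : f s₀ = (t - s₀) * (v - avg s₀) := by simp only [hf]; ring_nf; linarith [h1]
      rw [this, hs₀]
      exact mul_pos (by linarith) (by linarith)
    -- continuity of f on [0,t]
    have hηc : ContinuousOn η (Set.Icc 0 t) := by
      have h1 : IntegrableOn p (Set.uIcc (0:ℝ) t) := by
        rw [Set.uIcc_of_le ht.le]
        exact hpc.integrableOn_compact isCompact_Icc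
      have h2 := intervalIntegral.continuousOn_primitive_interval (μ := volume) h1
      rw [Set.uIcc_of_le ht.le] at h2
      exact (continuousOn_congr (fun τ _ => hη τ)).mpr h2
    have hfc : ContinuousOn f (Set.Icc 0 t) := by
      apply ContinuousOn.add (hηc.sub continuousOn_const)
      exact (continuousOn_const.sub continuousOn_id).mul continuousOn_const
    -- find s₁ near t with f s₁ < 0
    have hcont := hp t ⟨by linarith, htT⟩
    set ε : ℝ := (p t - v) / 2 with hε
    have hεpos : 0 < ε := by simp only [hε]; linarith
    obtain ⟨δ, hδpos, hδ⟩ := Metric.continuousWithinAt_iff.mp hcont ε hεpos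
    set δ' : ℝ := min (δ / 2) (t / 2) with hδ'
    have hδ'pos : 0 < δ' := lt_min (by linarith) (by linarith)
    set s₁ : ℝ := max s₀ (t - δ') with hs₁
    have hs₁lt : s₁ < t := max_lt hs₀lt (by linarith)
    have hs₁ge : 0 ≤ s₁ := le_max_of_le_left hs₀mem.1
    have hs₁close : t - s₁ ≤ δ' := by
      have : t - δ' ≤ s₁ := le_max_right _ _
      linarith
    have hplow : ∀ x ∈ Set.Icc s₁ t, v + ε ≤ p x := by
      intro x hx
      have hx0 : x ∈ Set.Icc (0:ℝ) T := ⟨le_trans hs₁ge hx.1, le_trans hx.2 htT⟩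
      have hdist : dist x t < δ := by
        rw [Real.dist_eq, abs_of_nonpos (by linarith [hx.2])]
        have : s₁ ≤ x := hx.1
        have h2 : δ' ≤ δ / 2 := min_le_left _ _
        linarith
      have := hδ hx0 hdist
      rw [Real.dist_eq] at this
      have := abs_lt.mp this
      simp only [hε] at *
      linarith [this.1]
    have hfs₁ : f s₁ < 0 := by
      have hI : ∫ x in s₁..t, (v + ε) ≤ ∫ x in s₁..t, p x := by
        apply intervalIntegral.integral_mono_on hs₁lt.le _ (hint s₁ t ⟨hs₁ge, hs₁lt.le⟩ ⟨ht.le, le_rfl⟩) hplow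
        exact intervalIntegrable_const
      rw [intervalIntegral.integral_const, smul_eq_mul] at hI
      have hsplit₁ := hsplit s₁ ⟨hs₁ge, hs₁lt.le⟩
      have : f s₁ = -(η t - η s₁) + (t - s₁) * v := by simp only [hf]; ring
      rw [this, hsplit₁]
      nlinarith [hI, hs₁lt, hεpos]
    -- IVT on [s₀, s₁]
    have hs₀s₁ : s₀ ≤ s₁ := le_max_left _ _
    have hIcc : Set.Icc s₀ s₁ ⊆ Set.Icc (0:ℝ) t :=
      Set.Icc_subset_Icc hs₀mem.1 hs₁lt.le
    have hIVT := intermediate_value_Icc' hs₀s₁ (hfc.mono hIcc)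
    have h0mem : (0:ℝ) ∈ Set.Icc (f s₁) (f s₀) := ⟨hfs₁.le, hfs₀.le⟩
    obtain ⟨s, hsmem, hfs⟩ := hIVT h0mem
    have hsIco : s ∈ Set.Ico (0:ℝ) t := ⟨le_trans hs₀mem.1 hsmem.1, lt_of_le_of_lt hsmem.2 hs₁lt⟩
    have hveq : v = avg s := by
      apply hkey s hsIco
      simp only [hf] at hfs
      linarith
    refine ⟨⟨s, hsIco, hveq⟩, ⟨s₀, hs₀Ico, ?_⟩⟩
    -- ω s₀ < η s₀
    rw [hω]
    have h1 := havgval s₀ hs₀Ico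
    nlinarith [hs₀lt, huv, hs₀]
  exact ⟨fun h1 h2 => (main h1 h2).1, part2, fun h1 h2 => (main h1 h2).2⟩
end

section
/- Let g : [0,t] → ℝ be continuous and ḡ(s) = min_{τ∈[s,t]} g(τ). If (a,b) is a maximal connected component of the open set {s ∈ [0,t) : g(s) > ḡ(s)}, then ḡ is constant on [a,b]: ḡ(a) = ḡ(s) = ḡ(b) for all s ∈ (a,b). -/
/-- if `(a,b)` is a maximal connected component of the open set
`{s ∈ [0,t) : g s > ḡ s}` (so `g a = ḡ a` and `g b = ḡ b`), then `ḡ` is constant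
on `[a,b]`: `ḡ a = ḡ s = ḡ b` for all `s ∈ (a,b)`. -/
theorem stmt_6 (t : ℝ) (ht : 0 < t) (g : ℝ → ℝ)
    (hg : ContinuousOn g (Set.Icc 0 t))
    (gbar : ℝ → ℝ) (hgbar : ∀ s ∈ Set.Icc (0:ℝ) t, IsLeast (g '' Set.Icc s t) (gbar s))
    (a b : ℝ) (hab : a < b) (ha : a ∈ Set.Icc 0 t) (hb : b ∈ Set.Icc 0 t)
    (hcomp : ∀ s ∈ Set.Ioo a b, gbar s < g s)
    (hga : g a = gbar a) (hgb : g b = gbar b) :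
    ∀ s ∈ Set.Ioo a b, gbar a = gbar s ∧ gbar s = gbar b := by
  have ha0 : (0:ℝ) ≤ a := ha.1
  have hbt : b ≤ t := hb.2
  have hmem : ∀ s ∈ Set.Ioo a b, s ∈ Set.Icc (0:ℝ) t := fun s hs =>
    ⟨le_of_lt (lt_of_le_of_lt ha0 hs.1), le_of_lt (lt_of_lt_of_le hs.2 hbt)⟩
  have mono : ∀ x ∈ Set.Icc (0:ℝ) t, ∀ y ∈ Set.Icc (0:ℝ) t, x ≤ y → gbar x ≤ gbar y := by
    intro x hx y hy hxy
    exact (hgbar x hx).2 (Set.image_mono (Set.Icc_subset_Icc hxy le_rfl) (hgbar y hy).1)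
  have step1 : ∀ s ∈ Set.Ioo a b, gbar s = gbar b := by
    intro s hs
    have hsI := hmem s hs
    refine le_antisymm (mono s hsI b hb hs.2.le) ?_
    obtain ⟨τ, hτ, hgτ⟩ := (hgbar s hsI).1
    rcases le_or_gt b τ with h | h
    · exact le_trans ((hgbar b hb).2 ⟨τ, ⟨h, hτ.2⟩, rfl⟩) hgτ.le
    · exfalso
      have hτab : τ ∈ Set.Ioo a b := ⟨lt_of_lt_of_le hs.1 hτ.1, h⟩
      have hlt := hcomp τ hτab
      have h2 : gbar s ≤ gbar τ := mono s hsI τ (hmem τ hτab) hτ.1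
      rw [hgτ] at hlt; linarith
  have hlb : ∀ x ∈ Set.Icc a t, gbar b ≤ g x := by
    intro x hx
    rcases eq_or_lt_of_le hx.1 with rfl | hax
    · have hcont : ContinuousWithinAt g (Set.Icc 0 t) a := hg a ha
      have hsub : Set.Ioo a b ⊆ Set.Icc (0:ℝ) t := fun s hs => hmem s hs
      have htend : Filter.Tendsto g (nhdsWithin a (Set.Ioo a b)) (nhds (g a)) :=
        hcont.mono hsub
      have hne : (nhdsWithin a (Set.Ioo a b)).NeBot := by
        rw [← mem_closure_iff_nhdsWithin_neBot, closure_Ioo hab.ne]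
        exact ⟨le_rfl, hab.le⟩
      refine ge_of_tendsto htend ?_
      filter_upwards [self_mem_nhdsWithin] with s hs
      have : gbar s ≤ g s := (hgbar s (hmem s hs)).2 ⟨s, ⟨le_rfl, (hmem s hs).2⟩, rfl⟩
      exact le_trans (le_of_eq (step1 s hs).symm) this
    · rcases lt_or_ge x b with hxb | hbx
      · have hxab : x ∈ Set.Ioo a b := ⟨hax, hxb⟩
        have : gbar x ≤ g x := (hgbar x (hmem x hxab)).2 ⟨x, ⟨le_rfl, hx.2⟩, rfl⟩
        rw [step1 x hxab] at this
        exact this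
      · exact (hgbar b hb).2 ⟨x, ⟨hbx, hx.2⟩, rfl⟩
  have step2 : gbar b ≤ gbar a := by
    obtain ⟨τ, hτ, hgτ⟩ := (hgbar a ha).1
    exact hgτ ▸ hlb τ hτ
  intro s hs
  have h1 := mono a ha s (hmem s hs) hs.1.le
  have h2 := step1 s hs
  constructor <;> linarith
end

section
/- Let p : [0,T] → ℝ be Lipschitz with constant M, v(s,t) the average of p over [s,t] (with v(t,t) = p(t)), and v̄(s,t) = min_{τ∈[s,t]} v(τ,t). Then for each fixed s, the map t ↦ v̄(s,t) is Lipschitz in t on (s,T] with Lipschitz constant at most M. -/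
open MeasureTheory

/-- Average of `p` over `[a,b]` is within `M*K` of `p c` when all points of
`[a,b]` are within `K` of `c`. -/
lemma stmt9_avg_est (T M : ℝ) (p : ℝ → ℝ)
    (hLip : ∀ t ∈ Set.Icc (0:ℝ) T, ∀ τ ∈ Set.Icc (0:ℝ) T, |p t - p τ| ≤ M * |t - τ|)
    (hcont : ContinuousOn p (Set.Icc 0 T))
    (a b c K : ℝ) (ha : 0 ≤ a) (hab : a < b) (hbT : b ≤ T)
    (hc : c ∈ Set.Icc (0:ℝ) T) (hM : 0 ≤ M)
    (hK : ∀ x ∈ Set.Icc a b, |x - c| ≤ K) :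
    |(b - a)⁻¹ * (∫ τ in a..b, p τ) - p c| ≤ M * K := by
  have hint : IntervalIntegrable p volume a b := by
    apply (hcont.mono ?_).intervalIntegrable
    rw [Set.uIcc_of_le hab.le]
    exact Set.Icc_subset_Icc ha hbT
  have hintc : IntervalIntegrable (fun _ : ℝ => p c) volume a b := intervalIntegrable_const
  have hba : (0:ℝ) < b - a := by linarith
  have hid : (b - a)⁻¹ * (∫ τ in a..b, p τ) - p c
      = (b - a)⁻¹ * ∫ τ in a..b, (p τ - p c) := by
    rw [intervalIntegral.integral_sub hint hintc, intervalIntegral.integral_const, smul_eq_mul]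
    field_simp
  rw [hid]
  have hbound : ‖∫ τ in a..b, (p τ - p c)‖ ≤ (M * K) * |b - a| := by
    apply intervalIntegral.norm_integral_le_of_norm_le_const
    intro x hx
    rw [Set.uIoc_of_le hab.le] at hx
    have hx' : x ∈ Set.Icc a b := ⟨hx.1.le, hx.2⟩
    have hx0 : x ∈ Set.Icc (0:ℝ) T := ⟨ha.trans hx'.1, hx'.2.trans hbT⟩
    calc ‖p x - p c‖ = |p x - p c| := rfl
      _ ≤ M * |x - c| := hLip x hx0 c hc
      _ ≤ M * K := mul_le_mul_of_nonneg_left (hK x hx') hM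
  rw [abs_mul, abs_inv, abs_of_pos hba]
  rw [Real.norm_eq_abs, abs_of_pos hba] at hbound
  calc (b - a)⁻¹ * |∫ τ in a..b, (p τ - p c)| ≤ (b - a)⁻¹ * ((M * K) * (b - a)) := by
        exact mul_le_mul_of_nonneg_left hbound (by positivity)
    _ = M * K := by field_simp

/-- with `v(s,t)` the average of a Lipschitz `p` over `[s,t]`
(`v(t,t) = p t`) and `v̄(s,t) = min_{τ∈[s,t]} v(τ,t)`, for fixed `s` the map
`t ↦ v̄(s,t)` is Lipschitz with constant `M` on `(s,T]`. -/
theorem stmt_9 (T M : ℝ) (hT : 0 < T) (p : ℝ → ℝ)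
    (hbd : ∀ τ ∈ Set.Icc (0:ℝ) T, |p τ| ≤ M)
    (hLip : ∀ t ∈ Set.Icc (0:ℝ) T, ∀ τ ∈ Set.Icc (0:ℝ) T, |p t - p τ| ≤ M * |t - τ|)
    (v : ℝ → ℝ → ℝ)
    (hv : ∀ s t : ℝ, s < t → v s t = (t - s)⁻¹ * ∫ τ in s..t, p τ)
    (hvd : ∀ t : ℝ, v t t = p t)
    (vbar : ℝ → ℝ → ℝ)
    (hvbar : ∀ s t : ℝ, 0 ≤ s → s ≤ t → t ≤ T →
      IsLeast ((fun τ => v τ t) '' Set.Icc s t) (vbar s t)) :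
    ∀ s ∈ Set.Icc (0:ℝ) T, ∀ t ∈ Set.Ioc s T, ∀ t' ∈ Set.Ioc s T,
      |vbar s t - vbar s t'| ≤ M * |t - t'| := by
  have hM : 0 ≤ M := (abs_nonneg _).trans (hbd 0 ⟨le_rfl, hT.le⟩)
  have hcont : ContinuousOn p (Set.Icc 0 T) := by
    have hlip : LipschitzOnWith ⟨M, hM⟩ p (Set.Icc 0 T) :=
      LipschitzOnWith.of_dist_le_mul fun x hx y hy => by
        rw [Real.dist_eq, Real.dist_eq]
        exact hLip x hx y hy
    exact hlip.continuousOn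
  have key : ∀ s ∈ Set.Icc (0:ℝ) T, ∀ t ∈ Set.Ioc s T, ∀ t' ∈ Set.Ioc s T,
      t ≤ t' → |vbar s t - vbar s t'| ≤ M * (t' - t) := by
    intro s hs t ht t' ht' htt'
    rcases eq_or_lt_of_le htt' with rfl | hlt
    · simp
    -- basic positions
    have hs0 : 0 ≤ s := hs.1
    have hst : s < t := ht.1
    have ht'T : t' ≤ T := ht'.2
    have htT : t ≤ T := ht.2
    have ht0 : 0 ≤ t := hs0.trans hst.le
    have htIcc : t ∈ Set.Icc (0:ℝ) T := ⟨ht0, htT⟩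
    -- claim C : for τ ∈ [s,t], |v τ t' - v τ t| ≤ M*(t'-t)
    have hC : ∀ τ, s ≤ τ → τ ≤ t → |v τ t' - v τ t| ≤ M * (t' - t) := by
      intro τ hsτ hτt
      have hτ0 : 0 ≤ τ := hs0.trans hsτ
      have he2 : |(t' - t)⁻¹ * (∫ σ in t..t', p σ) - p t| ≤ M * (t' - t) := by
        apply stmt9_avg_est T M p hLip hcont t t' t (t' - t) ht0 hlt ht'T htIcc hM
        intro x hx
        rw [abs_le]; constructor <;> [linarith [hx.1]; linarith [hx.2]]
      rcases eq_or_lt_of_le hτt with rfl | hτlt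
      · rw [hvd, hv τ t' hlt]
        exact he2
      · have he1 : |(t - τ)⁻¹ * (∫ σ in τ..t, p σ) - p t| ≤ M * (t - τ) := by
          apply stmt9_avg_est T M p hLip hcont τ t t (t - τ) hτ0 hτlt htT htIcc hM
          intro x hx
          rw [abs_le]; constructor <;> [linarith [hx.1]; linarith [hx.2]]
        set A := ∫ σ in τ..t, p σ with hA
        set B := ∫ σ in t..t', p σ with hB
        have hintA : IntervalIntegrable p volume τ t := by
          apply (hcont.mono ?_).intervalIntegrable
          rw [Set.uIcc_of_le hτlt.le]; exact Set.Icc_subset_Icc hτ0 htT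
        have hintB : IntervalIntegrable p volume t t' := by
          apply (hcont.mono ?_).intervalIntegrable
          rw [Set.uIcc_of_le hlt.le]; exact Set.Icc_subset_Icc ht0 ht'T
        have hadd : (∫ σ in τ..t', p σ) = A + B :=
          (intervalIntegral.integral_add_adjacent_intervals hintA hintB).symm
        have hτt' : τ < t' := hτlt.trans hlt
        have h1 : (0:ℝ) < t - τ := by linarith
        have h2 : (0:ℝ) < t' - t := by linarith
        have h3 : (0:ℝ) < t' - τ := by linarith
        have hid : v τ t' - v τ t
            = ((t' - t) / (t' - τ)) * (((t' - t)⁻¹ * B - p t) - ((t - τ)⁻¹ * A - p t)) := by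
          rw [hv τ t' hτt', hv τ t hτlt, hadd]
          field_simp
          ring
        rw [hid, abs_mul, abs_of_pos (by positivity : (0:ℝ) < (t' - t) / (t' - τ))]
        have habs : |(((t' - t)⁻¹ * B - p t) - ((t - τ)⁻¹ * A - p t))|
            ≤ M * (t' - t) + M * (t - τ) := (abs_sub _ _).trans (add_le_add he2 he1)
        calc (t' - t) / (t' - τ) * |(((t' - t)⁻¹ * B - p t) - ((t - τ)⁻¹ * A - p t))|
            ≤ (t' - t) / (t' - τ) * (M * (t' - t) + M * (t - τ)) := by
              exact mul_le_mul_of_nonneg_left habs (by positivity)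
          _ = M * (t' - t) := by field_simp; ring
    -- minimizers
    have h1 := hvbar s t hs0 hst.le htT
    have h2 := hvbar s t' hs0 (hst.trans hlt).le ht'T
    obtain ⟨τ₁, hτ₁mem, hτ₁eq⟩ := h1.1
    obtain ⟨τ₂, hτ₂mem, hτ₂eq⟩ := h2.1
    -- upper: vbar s t' ≤ vbar s t + M*(t'-t)
    have hup : vbar s t' - vbar s t ≤ M * (t' - t) := by
      have hle : vbar s t' ≤ v τ₁ t' :=
        h2.2 ⟨τ₁, ⟨hτ₁mem.1, hτ₁mem.2.trans hlt.le⟩, rfl⟩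
      have := hC τ₁ hτ₁mem.1 hτ₁mem.2
      rw [abs_le] at this
      rw [← hτ₁eq]
      linarith [this.1, this.2]
    -- lower: vbar s t - vbar s t' ≤ M*(t'-t)
    have hlo : vbar s t - vbar s t' ≤ M * (t' - t) := by
      rcases le_or_gt τ₂ t with hle | hgt
      · have hle' : vbar s t ≤ v τ₂ t := h1.2 ⟨τ₂, ⟨hτ₂mem.1, hle⟩, rfl⟩
        have := hC τ₂ hτ₂mem.1 hle
        rw [abs_le] at this
        rw [← hτ₂eq]
        linarith [this.1, this.2]
      · -- τ₂ > t
        have hpt : vbar s t ≤ p t := by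
          have := h1.2 ⟨t, ⟨hst.le, le_rfl⟩, rfl⟩
          simpa only [hvd] using this
        have hv2 : p t - M * (t' - t) ≤ v τ₂ t' := by
          rcases eq_or_lt_of_le hτ₂mem.2 with heq | hτ₂lt
          · rw [heq, hvd]
            have hl := hLip t htIcc t' ⟨ht0.trans hlt.le, ht'T⟩
            have habs : |t - t'| = t' - t := by
              rw [abs_of_nonpos (by linarith : t - t' ≤ 0)]; ring
            rw [habs, abs_le] at hl
            linarith [hl.1]
          · have := stmt9_avg_est T M p hLip hcont τ₂ t' t (t' - t)
              (hs0.trans hτ₂mem.1) hτ₂lt ht'T htIcc hM ?_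
            · rw [abs_le] at this
              rw [hv τ₂ t' hτ₂lt]
              linarith [this.1]
            · intro x hx
              rw [abs_le]; constructor <;> [linarith [hx.1, hgt]; linarith [hx.2]]
        rw [← hτ₂eq]
        linarith
    rw [abs_le]
    constructor <;> linarith
  intro s hs t ht t' ht'
  rcases le_total t t' with h | h
  · have := key s hs t ht t' ht' h
    have habs : |t - t'| = t' - t := by
      rw [abs_of_nonpos (by linarith : t - t' ≤ 0)]; ring
    rwa [habs]
  · have := key s hs t' ht' t ht h
    rw [abs_sub_comm] at this
    have habs : |t - t'| = t - t' := abs_of_nonneg (by linarith)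
    rwa [habs]
end

section
/- Let h : [0,t] → ℝ be monotone nondecreasing and Lipschitz, and let Φ = {s ∈ [0,t] : h'(s) exists and h'(s) > 0}. Then h restricted to Φ is injective (strictly increasing), and the image h([0,t] \ Φ) has Lebesgue measure zero; consequently h(Φ) has full measure in the interval [h(0), h(t)]. -/
open MeasureTheory Set

/-- Auxiliary: derivative (within `Icc 0 t`) of a monotone function is nonnegative. -/
lemma deriv_nonneg_of_monotoneOn {t : ℝ} (ht : 0 < t) {h : ℝ → ℝ}
    (hmono : MonotoneOn h (Set.Icc 0 t)) {x d : ℝ} (hx : x ∈ Set.Icc 0 t)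
    (hd : HasDerivWithinAt h d (Set.Icc 0 t) x) : 0 ≤ d := by
  rw [hasDerivWithinAt_iff_tendsto_slope] at hd
  rcases lt_or_eq_of_le hx.2 with hxt | hxt
  · -- approach from the right
    have hsub : Set.Ioc x t ⊆ Set.Icc 0 t \ {x} := by
      intro y hy
      exact ⟨⟨le_trans hx.1 hy.1.le, hy.2⟩, ne_of_gt hy.1⟩
    have htend : Filter.Tendsto (slope h x) (nhdsWithin x (Set.Ioc x t)) (nhds d) :=
      hd.mono_left (nhdsWithin_mono x hsub)
    have hne : (nhdsWithin x (Set.Ioc x t)).NeBot := by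
      rw [nhdsWithin_Ioc_eq_nhdsGT hxt]; infer_instance
    refine ge_of_tendsto htend ?_
    filter_upwards [self_mem_nhdsWithin] with y hy
    have : h x ≤ h y := hmono hx ⟨le_trans hx.1 hy.1.le, hy.2⟩ hy.1.le
    have hxy : 0 < y - x := by linarith [hy.1]
    rw [slope_def_field]
    exact div_nonneg (by linarith) hxy.le
  · -- x = t, approach from the left
    have hx0 : (0:ℝ) < x := hxt ▸ ht
    have hsub : Set.Ico 0 x ⊆ Set.Icc 0 t \ {x} := by
      intro y hy
      exact ⟨⟨hy.1, le_trans hy.2.le hx.2⟩, ne_of_lt hy.2⟩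
    have htend : Filter.Tendsto (slope h x) (nhdsWithin x (Set.Ico 0 x)) (nhds d) :=
      hd.mono_left (nhdsWithin_mono x hsub)
    have hne : (nhdsWithin x (Set.Ico 0 x)).NeBot := by
      rw [nhdsWithin_Ico_eq_nhdsLT hx0]; infer_instance
    refine ge_of_tendsto htend ?_
    filter_upwards [self_mem_nhdsWithin] with y hy
    have : h y ≤ h x := hmono ⟨hy.1, le_trans hy.2.le hx.2⟩ hx hy.2.le
    have hxy : y - x < 0 := by linarith [hy.2]
    rw [slope_def_field]
    exact div_nonneg_iff.mpr (Or.inr ⟨by linarith, hxy.le⟩)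

/-- for `h` nondecreasing and Lipschitz on `[0,t]` and
`Φ = {s ∈ [0,t] : h'(s) exists (within [0,t]) and h'(s) > 0}`, the restriction of
`h` to `Φ` is strictly increasing (hence injective), the image of the complement
`[0,t] \ Φ` is Lebesgue null, and `h '' Φ` has full measure in `[h 0, h t]`. -/
theorem stmt_12 (t : ℝ) (ht : 0 < t) (K : NNReal) (h : ℝ → ℝ)
    (hmono : MonotoneOn h (Set.Icc 0 t))
    (hLip : LipschitzOnWith K h (Set.Icc 0 t)) :
    StrictMonoOn h {s ∈ Set.Icc (0:ℝ) t |
        ∃ d, 0 < d ∧ HasDerivWithinAt h d (Set.Icc 0 t) s} ∧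
    Set.InjOn h {s ∈ Set.Icc (0:ℝ) t |
        ∃ d, 0 < d ∧ HasDerivWithinAt h d (Set.Icc 0 t) s} ∧
    volume (h '' (Set.Icc 0 t \ {s ∈ Set.Icc (0:ℝ) t |
        ∃ d, 0 < d ∧ HasDerivWithinAt h d (Set.Icc 0 t) s})) = 0 ∧
    volume (Set.Icc (h 0) (h t) \ h '' {s ∈ Set.Icc (0:ℝ) t |
        ∃ d, 0 < d ∧ HasDerivWithinAt h d (Set.Icc 0 t) s}) = 0 := by
  set Φ : Set ℝ := {s ∈ Set.Icc (0:ℝ) t |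
      ∃ d, 0 < d ∧ HasDerivWithinAt h d (Set.Icc 0 t) s} with hΦ
  -- Strict monotonicity on Φ
  have hsm : StrictMonoOn h Φ := by
    intro x hx y hy hxy
    rcases lt_or_eq_of_le (hmono hx.1 hy.1 hxy.le) with hlt | heq
    · exact hlt
    exfalso
    obtain ⟨d, hdpos, hder⟩ := hx.2
    -- h is constant on Icc x y
    have hconst : Set.EqOn h (fun _ => h x) (Set.Icc x y) := by
      intro z hz
      have h1 : h x ≤ h z := hmono hx.1 ⟨le_trans hx.1.1 hz.1, le_trans hz.2 hy.1.2⟩ hz.1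
      have h2 : h z ≤ h y := hmono ⟨le_trans hx.1.1 hz.1, le_trans hz.2 hy.1.2⟩ hy.1 hz.2
      simp only
      linarith [heq]
    have hder' : HasDerivWithinAt h d (Set.Icc x y) x :=
      hder.mono (Set.Icc_subset_Icc hx.1.1 hy.1.2)
    have hder0 : HasDerivWithinAt h 0 (Set.Icc x y) x := by
      have : HasDerivWithinAt (fun _ => h x) 0 (Set.Icc x y) x := hasDerivWithinAt_const _ _ _
      exact this.congr hconst (hconst ⟨le_refl x, hxy.le⟩)
    have hud : UniqueDiffWithinAt ℝ (Set.Icc x y) x :=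
      uniqueDiffOn_Icc hxy x ⟨le_refl x, hxy.le⟩
    have := hder'.derivWithin hud
    rw [hder0.derivWithin hud] at this
    exact absurd this.symm (ne_of_gt hdpos)
  -- image of complement is null
  have hnull : volume (h '' (Set.Icc 0 t \ Φ)) = 0 := by
    set B1 : Set ℝ := {x ∈ Set.Icc (0:ℝ) t \ Φ | DifferentiableWithinAt ℝ h (Set.Icc 0 t) x}
    set B2 : Set ℝ := {x ∈ Set.Icc (0:ℝ) t | ¬ DifferentiableWithinAt ℝ h (Set.Icc 0 t) x}
    have hcover : Set.Icc 0 t \ Φ ⊆ B1 ∪ B2 := by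
      intro x hx
      by_cases hdiff : DifferentiableWithinAt ℝ h (Set.Icc 0 t) x
      · exact Or.inl ⟨hx, hdiff⟩
      · exact Or.inr ⟨hx.1, hdiff⟩
    -- B1 : derivative is zero there, use Sard-type lemma
    have hB1 : volume (h '' B1) = 0 := by
      set F' : ℝ → ℝ →L[ℝ] ℝ :=
        fun x => (1 : ℝ →L[ℝ] ℝ).smulRight (derivWithin h (Set.Icc 0 t) x) with hF'
      have key : ∀ x ∈ B1, HasFDerivWithinAt h (F' x) B1 x := by
        intro x hx
        exact (hx.2.hasDerivWithinAt.mono (fun z hz => hz.1.1)).hasFDerivWithinAt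
      have keydet : ∀ x ∈ B1, (F' x).det = 0 := by
        intro x hx
        have hzero : derivWithin h (Set.Icc 0 t) x = 0 := by
          have hnn : 0 ≤ derivWithin h (Set.Icc 0 t) x :=
            deriv_nonneg_of_monotoneOn ht hmono hx.1.1 hx.2.hasDerivWithinAt
          rcases lt_or_eq_of_le hnn with hpos | heq
          · exact absurd ⟨hx.1.1, derivWithin h (Set.Icc 0 t) x, hpos,
              hx.2.hasDerivWithinAt⟩ hx.1.2
          · exact heq.symm
        show ((1 : ℝ →L[ℝ] ℝ).smulRight (derivWithin h (Set.Icc 0 t) x)).det = 0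
        rw [hzero]
        have : ((1 : ℝ →L[ℝ] ℝ).smulRight (0:ℝ)) = 0 := by ext; simp
        rw [this]
        simp [ContinuousLinearMap.det]
      exact addHaar_image_eq_zero_of_det_fderivWithin_eq_zero volume key keydet
    -- B2 : null by Rademacher, and Lipschitz image of null is null
    have hB2vol : volume B2 = 0 := by
      have hae := hLip.ae_differentiableWithinAt (μ := volume) (measurableSet_Icc (a := (0:ℝ)) (b := t))
      have : (volume.restrict (Set.Icc 0 t))
          {x | ¬ DifferentiableWithinAt ℝ h (Set.Icc 0 t) x} = 0 := hae
      rw [Measure.restrict_apply' measurableSet_Icc] at this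
      have hBeq : B2 = {x | ¬ DifferentiableWithinAt ℝ h (Set.Icc 0 t) x} ∩ Set.Icc 0 t := by
        ext x; constructor
        · rintro ⟨h1, h2⟩; exact ⟨h2, h1⟩
        · rintro ⟨h1, h2⟩; exact ⟨h2, h1⟩
      rw [hBeq, this]
    have hB2 : volume (h '' B2) = 0 := by
      have hsub : B2 ⊆ Set.Icc 0 t := fun x hx => hx.1
      have hLip' : LipschitzOnWith K h B2 := hLip.mono hsub
      have hbd := hLip'.hausdorffMeasure_image_le (d := 1) zero_le_one
      rw [hausdorffMeasure_real] at hbd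
      refine le_antisymm (hbd.trans ?_) zero_le
      rw [hB2vol, mul_zero]
    refine le_antisymm ?_ zero_le
    calc volume (h '' (Set.Icc 0 t \ Φ)) ≤ volume (h '' B1 ∪ h '' B2) := by
          refine measure_mono ?_
          rw [← Set.image_union]
          exact Set.image_mono hcover
      _ ≤ volume (h '' B1) + volume (h '' B2) := measure_union_le _ _
      _ = 0 := by rw [hB1, hB2, add_zero]
  refine ⟨hsm, hsm.injOn, hnull, ?_⟩
  -- full measure in [h 0, h t]
  have hcont : ContinuousOn h (Set.Icc 0 t) := hLip.continuousOn
  have hIVT : Set.Icc (h 0) (h t) ⊆ h '' Set.Icc 0 t :=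
    intermediate_value_Icc ht.le hcont
  have hsub : Set.Icc (h 0) (h t) \ h '' Φ ⊆ h '' (Set.Icc 0 t \ Φ) := by
    rintro y ⟨hy1, hy2⟩
    obtain ⟨x, hx, rfl⟩ := hIVT hy1
    refine ⟨x, ⟨hx, ?_⟩, rfl⟩
    intro hxΦ
    exact hy2 ⟨x, hxΦ, rfl⟩
  exact le_antisymm ((measure_mono hsub).trans hnull.le) zero_le
end
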